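/- With the notation of the Latin-square basis construction, each state |φ_{n,m,l}⟩ = (1/d) Σ_{k∈Z_d} ω^{nk} |k⟩ ⊗ Σ_{i∈Z_d} ω^{mi} |i⟩ ⊗ |j(i,k+l)⟩ is absolutely maximally entangled: the reduced density matrix of |φ_{n,m,l}⟩⟨φ_{n,m,l}| on each single subsystem (obtained by tracing out the other two tensor factors) equals I_d / d. -/
import Mathlib

open Complex

/-- The component of `|φ_{n,m,l}⟩` at `|k⟩⊗|i⟩⊗|j⟩`. -/
noncomputable def phiC (d : ℕ) (L : ZMod d → ZMod d → ZMod d)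
    (n m l : ZMod d) (k i j : ZMod d) : ℂ :=
  (d : ℂ)⁻¹ * Complex.exp (2 * Real.pi * Complex.I / d) ^ (n.val * k.val) *
    Complex.exp (2 * Real.pi * Complex.I / d) ^ (m.val * i.val) *
    (if L i j = k + l then 1 else 0)

noncomputable def phiW (d : ℕ) : ℂ := Complex.exp (2 * Real.pi * Complex.I / d)

lemma phiW_ne_zero (d : ℕ) : phiW d ≠ 0 := Complex.exp_ne_zero _

lemma phiW_conj (d : ℕ) : (starRingEnd ℂ) (phiW d) = (phiW d)⁻¹ := by
  unfold phiW
  rw [← Complex.exp_conj, ← Complex.exp_neg]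
  congr 1
  simp only [map_div₀, map_mul, Complex.conj_I, Complex.conj_natCast, Complex.conj_ofReal,
    map_ofNat]
  ring

lemma phiC_eq (d : ℕ) (L : ZMod d → ZMod d → ZMod d) (n m l k i j : ZMod d) :
    phiC d L n m l k i j = (d : ℂ)⁻¹ * phiW d ^ (n.val * k.val) *
      phiW d ^ (m.val * i.val) * (if L i j = k + l then 1 else 0) := rfl

/-- Each `|φ_{n,m,l}⟩` is absolutely maximally entangled: the reduced
density matrix on each of the three subsystems equals `I_d/d`. -/
theorem phiC_absolutely_maximally_entangled (d : ℕ) [NeZero d]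
    (L : ZMod d → ZMod d → ZMod d)
    (hrow : ∀ i, Function.Bijective (L i))
    (hcol : ∀ j, Function.Bijective fun i => L i j)
    (n m l : ZMod d) :
    (∀ k k' : ZMod d,
      (∑ i : ZMod d, ∑ j : ZMod d,
        phiC d L n m l k i j * (starRingEnd ℂ) (phiC d L n m l k' i j)) =
        if k = k' then (d : ℂ)⁻¹ else 0) ∧
    (∀ i i' : ZMod d,
      (∑ k : ZMod d, ∑ j : ZMod d,
        phiC d L n m l k i j * (starRingEnd ℂ) (phiC d L n m l k i' j)) =
        if i = i' then (d : ℂ)⁻¹ else 0) ∧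
    (∀ j j' : ZMod d,
      (∑ k : ZMod d, ∑ i : ZMod d,
        phiC d L n m l k i j * (starRingEnd ℂ) (phiC d L n m l k i j')) =
        if j = j' then (d : ℂ)⁻¹ else 0) := by
  have hd : (d : ℂ) ≠ 0 := Nat.cast_ne_zero.2 (NeZero.ne d)
  have hz0 : phiW d ≠ 0 := phiW_ne_zero d
  -- general term formula
  have hterm : ∀ (k k' i i' j j' : ZMod d),
      phiC d L n m l k i j * (starRingEnd ℂ) (phiC d L n m l k' i' j') =
      (d:ℂ)⁻¹ * (d:ℂ)⁻¹ * (phiW d ^ (n.val*k.val) * (phiW d ^ (n.val*k'.val))⁻¹) *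
        (phiW d ^ (m.val*i.val) * (phiW d ^ (m.val*i'.val))⁻¹) *
        ((if L i j = k + l then (1:ℂ) else 0) * (if L i' j' = k' + l then (1:ℂ) else 0)) := by
    intro k k' i i' j j'
    rw [phiC_eq, phiC_eq]
    simp only [map_mul, map_pow, map_inv₀, Complex.conj_natCast, phiW_conj, inv_pow,
      apply_ite (starRingEnd ℂ), map_one, map_zero]
    ring
  -- diagonal term formula
  have hdiag : ∀ (k i j j' : ZMod d),
      phiC d L n m l k i j * (starRingEnd ℂ) (phiC d L n m l k i j') =
      (d:ℂ)⁻¹ * (d:ℂ)⁻¹ *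
        ((if L i j = k + l then (1:ℂ) else 0) * (if L i j' = k + l then (1:ℂ) else 0)) := by
    intro k i j j'
    rw [hterm, mul_inv_cancel₀ (pow_ne_zero _ hz0), mul_inv_cancel₀ (pow_ne_zero _ hz0),
      mul_one, mul_one]
  -- row indicator sum
  have hL : ∀ (i c : ZMod d), (∑ j : ZMod d, if L i j = c then (1:ℂ) else 0) = 1 := by
    intro i c
    rw [Fintype.sum_bijective (L i) (hrow i) _ (fun s => if s = c then (1:ℂ) else 0)
      (fun j => rfl)]
    simp
  -- k indicator sum
  have hK : ∀ c : ZMod d, (∑ k : ZMod d, if c = k + l then (1:ℂ) else 0) = 1 := by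
    intro c
    have h : ∀ k : ZMod d, (if c = k + l then (1:ℂ) else 0) = (if c - l = k then (1:ℂ) else 0) := by
      intro k
      by_cases h : c = k + l
      · rw [if_pos h, if_pos (by rw [sub_eq_iff_eq_add]; exact h)]
      · rw [if_neg h, if_neg (fun hc => h (by rw [← sub_eq_iff_eq_add]; exact hc))]
    simp only [h]
    simp
  refine ⟨?_, ?_, ?_⟩
  · -- first subsystem
    intro k k'
    by_cases hk : k = k'
    · subst hk
      rw [if_pos rfl]
      have e : ∀ i : ZMod d,
          (∑ j : ZMod d, phiC d L n m l k i j * (starRingEnd ℂ) (phiC d L n m l k i j)) =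
          (d:ℂ)⁻¹ * (d:ℂ)⁻¹ := by
        intro i
        have e2 : ∀ j : ZMod d, phiC d L n m l k i j * (starRingEnd ℂ) (phiC d L n m l k i j)
            = (d:ℂ)⁻¹ * (d:ℂ)⁻¹ * (if L i j = k + l then (1:ℂ) else 0) := by
          intro j
          rw [hdiag]
          by_cases h : L i j = k + l <;> simp [h]
        simp only [e2]
        rw [← Finset.mul_sum, hL i (k + l), mul_one]
      simp only [e, Finset.sum_const, Finset.card_univ, ZMod.card, nsmul_eq_mul]
      field_simp
    · rw [if_neg hk]
      refine Finset.sum_eq_zero fun i _ => Finset.sum_eq_zero fun j _ => ?_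
      rw [hterm]
      have hc : ¬ (L i j = k + l ∧ L i j = k' + l) := by
        rintro ⟨h1, h2⟩
        exact hk (add_right_cancel (h1.symm.trans h2))
      by_cases h1 : L i j = k + l
      · rw [if_pos h1, if_neg (fun h2 => hc ⟨h1, h2⟩)]; ring
      · rw [if_neg h1]; ring
  · -- second subsystem
    intro i i'
    by_cases hi : i = i'
    · subst hi
      rw [if_pos rfl]
      have e2 : ∀ (k j : ZMod d), phiC d L n m l k i j * (starRingEnd ℂ) (phiC d L n m l k i j)
          = (d:ℂ)⁻¹ * (d:ℂ)⁻¹ * (if L i j = k + l then (1:ℂ) else 0) := by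
        intro k j
        rw [hdiag]
        by_cases h : L i j = k + l <;> simp [h]
      simp only [e2, ← Finset.mul_sum]
      rw [Finset.sum_comm]
      rw [Finset.sum_congr rfl (fun j _ => hK (L i j))]
      simp only [Finset.sum_const, Finset.card_univ, ZMod.card, nsmul_eq_mul, mul_one]
      field_simp
    · rw [if_neg hi]
      refine Finset.sum_eq_zero fun k _ => Finset.sum_eq_zero fun j _ => ?_
      rw [hterm]
      have hc : ¬ (L i j = k + l ∧ L i' j = k + l) := by
        rintro ⟨h1, h2⟩
        exact hi ((hcol j).injective (h1.trans h2.symm))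
      by_cases h1 : L i j = k + l
      · rw [if_pos h1, if_neg (fun h2 => hc ⟨h1, h2⟩)]; ring
      · rw [if_neg h1]; ring
  · -- third subsystem
    intro j j'
    by_cases hj : j = j'
    · subst hj
      rw [if_pos rfl]
      have e2 : ∀ (k i : ZMod d), phiC d L n m l k i j * (starRingEnd ℂ) (phiC d L n m l k i j)
          = (d:ℂ)⁻¹ * (d:ℂ)⁻¹ * (if L i j = k + l then (1:ℂ) else 0) := by
        intro k i
        rw [hdiag]
        by_cases h : L i j = k + l <;> simp [h]
      simp only [e2, ← Finset.mul_sum]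
      rw [Finset.sum_comm]
      rw [Finset.sum_congr rfl (fun i _ => hK (L i j))]
      simp only [Finset.sum_const, Finset.card_univ, ZMod.card, nsmul_eq_mul, mul_one]
      field_simp
    · rw [if_neg hj]
      refine Finset.sum_eq_zero fun k _ => Finset.sum_eq_zero fun i _ => ?_
      rw [hterm]
      have hc : ¬ (L i j = k + l ∧ L i j' = k + l) := by
        rintro ⟨h1, h2⟩
        exact hj ((hrow i).injective (h1.trans h2.symm))
      by_cases h1 : L i j = k + l
      · rw [if_pos h1, if_neg (fun h2 => hc ⟨h1, h2⟩)]; ring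
      · rw [if_neg h1]; ring
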